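/- Let F be the ring of finite (bounded) hyperrationals in an ultrapower *ℚ, and I the ideal of infinitesimal hyperrationals. Then I is a maximal ideal of F and the quotient field F/I is isomorphic to ℝ. -/

import Mathlib

open Filter

/-- The hyperrationals: the ultrapower of ℚ by the hyperfilter on ℕ. -/
abbrev Hyperrational : Type := Germ (hyperfilter ℕ : Filter ℕ) ℚ

namespace HyperratAux

noncomputable section

open Filter.Germ Hyperreal

theorem map_cast_coe (f : ℕ → ℚ) :
    Germ.map (Rat.cast : ℚ → ℝ) (↑f : Hyperrational) = ofSeq (fun n => (f n : ℝ)) :=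
  Germ.map_coe _ _

theorem coe_abs' {β : Type*} [AddCommGroup β] [LinearOrder β] [IsOrderedAddMonoid β] (f : ℕ → β) :
    |(↑f : Germ (hyperfilter ℕ : Filter ℕ) β)| = (↑(fun n => |f n|) : Germ (hyperfilter ℕ : Filter ℕ) β) := by
  rw [Germ.abs_def, Germ.map_coe]
  rfl

/-- The natural ring hom from the hyperrationals to the hyperreals. -/
def toHyp : Hyperrational →+* Hyperreal where
  toFun x := x.map (Rat.cast : ℚ → ℝ)
  map_one' := by
    show Germ.map _ ((1 : ℕ → ℚ) : Hyperrational) = 1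
    rw [map_cast_coe]
    show ((fun n => ((1 : ℕ → ℚ) n : ℝ)) : Germ (hyperfilter ℕ : Filter ℕ) ℝ) = 1
    rw [← Germ.coe_one]
    congr 1
    funext n
    simp
  map_mul' x y := Germ.inductionOn₂ x y fun f g => by
    show Germ.map _ (↑f * ↑g : Hyperrational) = Germ.map _ (↑f : Hyperrational) * Germ.map _ (↑g : Hyperrational)
    rw [← Germ.coe_mul, map_cast_coe, map_cast_coe, map_cast_coe]
    show _ = ((fun n => (f n : ℝ)) : Germ (hyperfilter ℕ : Filter ℕ) ℝ) * ((fun n => (g n : ℝ)) : Germ (hyperfilter ℕ : Filter ℕ) ℝ)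
    rw [← Germ.coe_mul]
    show Germ.ofFun _ = Germ.ofFun _
    congr 1
    funext n
    simp [Pi.mul_apply]
  map_zero' := by
    show Germ.map _ ((0 : ℕ → ℚ) : Hyperrational) = 0
    rw [map_cast_coe]
    show ((fun n => ((0 : ℕ → ℚ) n : ℝ)) : Germ (hyperfilter ℕ : Filter ℕ) ℝ) = 0
    rw [← Germ.coe_zero]
    congr 1
    funext n
    simp
  map_add' x y := Germ.inductionOn₂ x y fun f g => by
    show Germ.map _ (↑f + ↑g : Hyperrational) = Germ.map _ (↑f : Hyperrational) + Germ.map _ (↑g : Hyperrational)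
    rw [← Germ.coe_add, map_cast_coe, map_cast_coe, map_cast_coe]
    show _ = ((fun n => (f n : ℝ)) : Germ (hyperfilter ℕ : Filter ℕ) ℝ) + ((fun n => (g n : ℝ)) : Germ (hyperfilter ℕ : Filter ℕ) ℝ)
    rw [← Germ.coe_add]
    show Germ.ofFun _ = Germ.ofFun _
    congr 1
    funext n
    simp [Pi.add_apply]

theorem toHyp_coe (f : ℕ → ℚ) : toHyp (↑f : Hyperrational) = ofSeq (fun n => (f n : ℝ)) :=
  map_cast_coe f

theorem toHyp_lt_iff {x y : Hyperrational} : toHyp x < toHyp y ↔ x < y :=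
  Germ.inductionOn₂ x y fun f g => by
    rw [toHyp_coe, toHyp_coe, ofSeq_lt_ofSeq, Germ.coe_lt]
    exact eventually_congr (Eventually.of_forall fun n => by simp [Rat.cast_lt])

theorem toHyp_abs (x : Hyperrational) : toHyp |x| = |toHyp x| :=
  Germ.inductionOn x fun f => by
    rw [coe_abs', toHyp_coe, toHyp_coe]
    show _ = |((fun n => (f n : ℝ)) : Germ (hyperfilter ℕ : Filter ℕ) ℝ)|
    rw [coe_abs']
    show Germ.ofFun _ = Germ.ofFun _
    congr 1
    funext n
    simp [Rat.cast_abs]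

theorem toHyp_natCast (n : ℕ) : toHyp (n : Hyperrational) = ((n : ℝ) : Hyperreal) := by
  rw [map_natCast]
  norm_cast

end

end HyperratAux

open HyperratAux Hyperreal

/-- In the hyperrationals, the finite elements form a subring F, the
infinitesimals form an ideal I of F which is maximal, and F ⧸ I ≅ ℝ. -/
theorem finite_hyperrationals_mod_infinitesimals_iso_real :
    ∃ F : Subring Hyperrational,
      (∀ x : Hyperrational, x ∈ F ↔ ∃ n : ℕ, |x| < (n : Hyperrational)) ∧
      ∃ I : Ideal F,
        (∀ x : F, x ∈ I ↔ ∀ n : ℕ, 0 < n → |(x : Hyperrational)| < ((n : Hyperrational))⁻¹) ∧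
        I.IsMaximal ∧ Nonempty ((F ⧸ I) ≃+* ℝ) := by
  classical
  -- the subring of finite elements
  refine ⟨{
    carrier := {x | ∃ n : ℕ, |x| < (n : Hyperrational)}
    one_mem' := ⟨2, by rw [abs_one]; exact_mod_cast one_lt_two⟩
    zero_mem' := ⟨1, by rw [abs_zero]; exact_mod_cast zero_lt_one⟩
    add_mem' := by
      rintro a b ⟨n, hn⟩ ⟨m, hm⟩
      exact ⟨n + m, lt_of_le_of_lt (abs_add_le a b) (by push_cast; exact add_lt_add hn hm)⟩
    neg_mem' := by
      rintro a ⟨n, hn⟩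
      exact ⟨n, by rwa [abs_neg]⟩
    mul_mem' := by
      rintro a b ⟨n, hn⟩ ⟨m, hm⟩
      refine ⟨n * m, ?_⟩
      rw [abs_mul]
      push_cast
      exact mul_lt_mul'' hn hm (abs_nonneg _) (abs_nonneg _) }, fun x => Iff.rfl, ?_⟩
  set F : Subring Hyperrational :=
    { carrier := {x | ∃ n : ℕ, |x| < (n : Hyperrational)}
      one_mem' := _, zero_mem' := _, add_mem' := _, neg_mem' := _, mul_mem' := _ } with hF
  -- every element of F maps to a non-infinite hyperreal
  have hfin : ∀ x : F, ¬Infinite (toHyp (x : Hyperrational)) := by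
    rintro ⟨x, n, hn⟩ hinf
    have h1 : |toHyp x| < ((n : ℝ) : Hyperreal) := by
      rw [← toHyp_abs, ← toHyp_natCast]
      exact toHyp_lt_iff.2 hn
    have h2 := infinite_iff_abs_lt_abs.1 hinf (n : ℝ)
    rw [← Hyperreal.coe_abs] at h2
    exact absurd (h2.trans h1) (by norm_num)
  -- the standard-part ring hom F →+* ℝ
  set st' : F →+* ℝ := {
    toFun := fun x => st (toHyp (x : Hyperrational))
    map_one' := by
      show st (toHyp ((1 : F) : Hyperrational)) = 1
      rw [Subring.coe_one, map_one, ← Hyperreal.coe_one, st_id_real]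
    map_zero' := by
      show st (toHyp ((0 : F) : Hyperrational)) = 0
      rw [Subring.coe_zero, map_zero, ← Hyperreal.coe_zero, st_id_real]
    map_mul' := fun a b => by
      show st (toHyp (((a * b : F)) : Hyperrational)) = _
      rw [Subring.coe_mul, map_mul]
      exact st_mul (hfin a) (hfin b)
    map_add' := fun a b => by
      show st (toHyp (((a + b : F)) : Hyperrational)) = _
      rw [Subring.coe_add, map_add]
      exact st_add (hfin a) (hfin b) } with hst'
  -- st' is surjective
  have hsurj : Function.Surjective st' := by
    intro r
    -- choose rationals close to r
    have hq : ∀ n : ℕ, ∃ q : ℚ, |r - (q : ℝ)| < 1 / (n + 1) := by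
      intro n
      obtain ⟨q, hq1, hq2⟩ := exists_rat_btwn (show r - 1/(n+1) < r by
        have : (0:ℝ) < 1/(n+1) := by positivity
        linarith)
      exact ⟨q, abs_sub_lt_iff.2 ⟨by linarith, by linarith⟩⟩
    choose q hq using hq
    -- the germ of the sequence q
    set x : Hyperrational := ((q : ℕ → ℚ) : Hyperrational) with hx
    have hxb : ∀ n : ℕ, |q n| < (⌈|r|⌉₊ + 2 : ℚ) := by
      intro n
      have h1 : |r - (q n : ℝ)| < 1 := lt_of_lt_of_le (hq n) (by
        rw [div_le_one (by positivity)]; push_cast; linarith)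
      have h2 : |(q n : ℝ)| < |r| + 1 := by
        have := abs_sub_abs_le_abs_sub (q n : ℝ) r
        rw [abs_sub_comm] at h1
        linarith
      have h3 : |r| ≤ (⌈|r|⌉₊ : ℝ) := Nat.le_ceil _
      rw [show ((⌈|r|⌉₊ + 2 : ℚ) : ℚ) = ((⌈|r|⌉₊ : ℚ) + 2) by ring]
      have : |(q n : ℝ)| < (⌈|r|⌉₊ : ℝ) + 2 := by linarith
      exact_mod_cast (by push_cast at this ⊢; exact this : |(q n : ℝ)| < ((⌈|r|⌉₊ : ℚ) : ℝ) + 2)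
    have hxF : x ∈ F := by
      refine ⟨⌈|r|⌉₊ + 2, ?_⟩
      rw [hx, coe_abs']
      have : ((⌈|r|⌉₊ + 2 : ℕ) : Hyperrational) = ((fun _ => ((⌈|r|⌉₊ + 2 : ℕ) : ℚ)) : ℕ → ℚ) := by
        rw [← map_natCast (Germ.coeRingHom (hyperfilter ℕ : Filter ℕ)) (⌈|r|⌉₊ + 2)]
        rfl
      rw [this, Germ.coe_lt]
      exact Eventually.of_forall fun n => by
        have := hxb n; push_cast at this ⊢; simpa using this
    -- the sequence tends to r
    have htend : Filter.Tendsto (fun n => (q n : ℝ)) atTop (nhds r) := by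
      rw [Metric.tendsto_atTop]
      intro e he
      obtain ⟨N, hN⟩ := exists_nat_one_div_lt he
      refine ⟨N, fun n hn => ?_⟩
      rw [Real.dist_eq, abs_sub_comm]
      refine lt_of_lt_of_le (hq n) (le_trans ?_ hN.le)
      gcongr
    have hisSt : IsSt (toHyp x) r := by
      have : toHyp x = ofSeq (fun n => (q n : ℝ)) := by
        rw [hx, toHyp_coe]
      rw [this]
      exact isSt_of_tendsto htend
    exact ⟨⟨x, hxF⟩, hisSt.st_eq⟩
  -- take I to be the kernel of st'
  refine ⟨RingHom.ker st', ?_, RingHom.ker_isMaximal_of_surjective st' hsurj,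
    ⟨RingHom.quotientKerEquivOfSurjective hsurj⟩⟩
  intro x
  rw [RingHom.mem_ker]
  constructor
  · intro h n hn
    have hinfml : Infinitesimal (toHyp (x : Hyperrational)) := by
      have := isSt_st' (hfin x)
      rw [hst'] at h
      simp only [RingHom.coe_mk, MonoidHom.coe_mk, OneHom.coe_mk] at h
      rwa [h] at this
    have h1 : |toHyp (x : Hyperrational)| < (((n : ℝ)⁻¹ : ℝ) : Hyperreal) := by
      rcases abs_lt.2 (infinitesimal_def.1 hinfml ((n : ℝ)⁻¹) (by positivity)) with h'
      exact h'
    rw [← toHyp_abs] at h1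
    have h2 : (((n : ℝ)⁻¹ : ℝ) : Hyperreal) = toHyp ((n : Hyperrational))⁻¹ := by
      rw [map_inv₀, toHyp_natCast]
      norm_cast
    rw [h2] at h1
    exact toHyp_lt_iff.1 h1
  · intro h
    have hinfml : Infinitesimal (toHyp (x : Hyperrational)) := by
      rw [infinitesimal_def]
      intro r hr
      obtain ⟨N, hN⟩ := exists_nat_one_div_lt hr
      have hN1 : (0:ℕ) < N + 1 := Nat.succ_pos N
      have h1 : |(x : Hyperrational)| < ((N + 1 : ℕ) : Hyperrational)⁻¹ := h (N + 1) hN1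
      have h2 : |toHyp (x : Hyperrational)| < (((N + 1 : ℕ) : ℝ)⁻¹ : ℝ) := by
        have := toHyp_lt_iff.2 h1
        rw [toHyp_abs, map_inv₀, toHyp_natCast] at this
        convert this using 2
        norm_cast
      have h3 : (((N + 1 : ℕ) : ℝ)⁻¹ : ℝ) < r := by
        rw [one_div] at hN
        exact lt_of_le_of_lt (by push_cast; norm_num) hN
      have h4 : |toHyp (x : Hyperrational)| < (r : Hyperreal) :=
        h2.trans (Hyperreal.coe_lt_coe.2 h3)
      exact abs_lt.1 h4
    have := hinfml
    rw [hst']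
    simp only [RingHom.coe_mk, MonoidHom.coe_mk, OneHom.coe_mk]
    exact ((isSt_st' (hfin x)).unique (this : IsSt _ 0))
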